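/- Square-root Grönwall (transport estimate): let y : [a,b] → ℝ be differentiable and nonnegative, and let h : [a,b] → ℝ be continuous and nonnegative. If y'(t) ≤ 2 h(t) √(y(t)) for all t ∈ [a,b], then √(y(b)) ≤ √(y(a)) + ∫ₐᵇ h(t) dt. -/
import Mathlib

open Real MeasureTheory intervalIntegral

theorem sqrt_gronwall (a b : ℝ) (hab : a ≤ b)
    (y y' h : ℝ → ℝ)
    (hy : ∀ t ∈ Set.Icc a b, HasDerivAt y (y' t) t)
    (hy0 : ∀ t ∈ Set.Icc a b, 0 ≤ y t)
    (hh : ContinuousOn h (Set.Icc a b))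
    (hh0 : ∀ t ∈ Set.Icc a b, 0 ≤ h t)
    (hineq : ∀ t ∈ Set.Icc a b, y' t ≤ 2 * h t * Real.sqrt (y t)) :
    Real.sqrt (y b) ≤ Real.sqrt (y a) + ∫ t in a..b, h t := by
  have hyc : ContinuousOn y (Set.Icc a b) := fun t ht =>
    (hy t ht).continuousAt.continuousWithinAt
  have hint : IntervalIntegrable h volume a b := by
    apply ContinuousOn.intervalIntegrable
    rwa [Set.uIcc_of_le hab]
  have hFc : ContinuousOn (fun t => ∫ s in a..t, h s) (Set.Icc a b) := by
    have := intervalIntegral.continuousOn_primitive_interval'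
      (f := h) (μ := volume) hint Set.left_mem_uIcc
    rwa [Set.uIcc_of_le hab] at this
  have key : ∀ ε > (0:ℝ), Real.sqrt (y b + ε) ≤ Real.sqrt (y a + ε) + ∫ t in a..b, h t := by
    intro ε hε
    set g : ℝ → ℝ := fun t => Real.sqrt (y t + ε) - ∫ s in a..t, h s with hg
    have hgc : ContinuousOn g (Set.Icc a b) :=
      ((hyc.add continuousOn_const).sqrt).sub hFc
    have hder : ∀ x ∈ Set.Ioo a b,
        HasDerivAt g (y' x / (2 * Real.sqrt (y x + ε)) - h x) x := by
      intro x hx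
      have hxI : x ∈ Set.Icc a b := Set.mem_Icc_of_Ioo hx
      have hpos : 0 < y x + ε := by linarith [hy0 x hxI]
      have hs : HasDerivAt (fun t => Real.sqrt (y t + ε))
          (y' x / (2 * Real.sqrt (y x + ε))) x := by
        have := ((hy x hxI).add_const ε).sqrt (ne_of_gt hpos)
        simpa using this
      have hF : HasDerivAt (fun t => ∫ s in a..t, h s) (h x) x := by
        refine intervalIntegral.integral_hasDerivAt_right
          (hint.mono_set ?_) ?_ ?_
        · rw [Set.uIcc_of_le (le_of_lt hx.1), Set.uIcc_of_le hab]
          exact Set.Icc_subset_Icc le_rfl (le_of_lt hx.2)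
        · exact ⟨Set.Ioo a b, Ioo_mem_nhds hx.1 hx.2,
            (hh.mono Set.Ioo_subset_Icc_self).aestronglyMeasurable measurableSet_Ioo⟩
        · exact hh.continuousAt (Icc_mem_nhds hx.1 hx.2)
      exact hs.sub hF
    have hanti : AntitoneOn g (Set.Icc a b) := by
      refine antitoneOn_of_deriv_nonpos (convex_Icc a b) hgc (fun x hx => ?_) (fun x hx => ?_)
      · rw [interior_Icc] at hx
        exact ((hder x hx).differentiableAt).differentiableWithinAt
      · rw [interior_Icc] at hx
        have hxI : x ∈ Set.Icc a b := Set.mem_Icc_of_Ioo hx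
        have hpos : 0 < y x + ε := by linarith [hy0 x hxI]
        rw [(hder x hx).deriv]
        have hsp : 0 < Real.sqrt (y x + ε) := Real.sqrt_pos.mpr hpos
        have h1 : y' x ≤ 2 * h x * Real.sqrt (y x + ε) := by
          refine le_trans (hineq x hxI) ?_
          have := Real.sqrt_le_sqrt (show y x ≤ y x + ε by linarith)
          have := hh0 x hxI
          nlinarith
        rw [sub_nonpos, div_le_iff₀ (by positivity)]
        linarith [h1]
    have := hanti (Set.left_mem_Icc.mpr hab) (Set.right_mem_Icc.mpr hab) hab
    simp only [hg, intervalIntegral.integral_same] at this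
    linarith
  refine le_of_forall_pos_le_add fun δ hδ => ?_
  have hk := key (δ ^ 2) (by positivity)
  have hb1 : Real.sqrt (y b) ≤ Real.sqrt (y b + δ ^ 2) :=
    Real.sqrt_le_sqrt (by nlinarith)
  have ha1 : Real.sqrt (y a + δ ^ 2) ≤ Real.sqrt (y a) + δ := by
    have h1 : y a + δ ^ 2 ≤ (Real.sqrt (y a) + δ) ^ 2 := by
      nlinarith [Real.sq_sqrt (hy0 a (Set.left_mem_Icc.mpr hab)),
        Real.sqrt_nonneg (y a)]
    calc Real.sqrt (y a + δ ^ 2) ≤ Real.sqrt ((Real.sqrt (y a) + δ) ^ 2) :=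
          Real.sqrt_le_sqrt h1
      _ = Real.sqrt (y a) + δ := Real.sqrt_sq (by positivity)
  linarith
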